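/- Let each f_i : ℝᵖ → ℝ be μ-strongly convex with L-Lipschitz continuous gradient and x* the unique minimizer of ∑_i f_i. Let R ∈ ℝ^{n×n} be row-stochastic, u ∈ ℝⁿ nonnegative with uᵀR = uᵀ and uᵀ𝟙 = n; let v ∈ ℝⁿ be nonnegative with 𝟙ᵀv = n. Let 𝛂 = diag(α_1,…,α_n) with α_i ≥ 0 and ᾱ := max_i α_i. Let N_R, N_C be norms on ℝⁿ, extended columnwise to ℝ^{n×p} as 𝒩_R, 𝒩_C, such that ‖z‖₂ ≤ N_R(z) for all z, N_R(𝛂z) ≤ ᾱ·N_R(z) for all z, and N_R(z) ≤ δ_{R,C}·N_C(z) for all z and some constant δ_{R,C} ≥ 0. Let σ_R := sup{N_R((R − 𝟙uᵀ/n)z) : N_R(z) ≤ 1}. Let x, y ∈ ℝ^{n×p} satisfy 𝟙ᵀy = 𝟙ᵀ∇F(x); set x̄ := (1/n)xᵀu, ȳ := (1/n)yᵀ𝟙, x⁺ := R(x − 𝛂y), x̄⁺ := (1/n)(x⁺)ᵀu. Then 𝒩_R(x⁺ − 𝟙(x̄⁺)ᵀ) ≤ σ_R(1 + ᾱ·N_R(v)·L/√n)·𝒩_R(x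 − 𝟙x̄ᵀ) + ᾱσ_R δ_{R,C}·𝒩_C(y − vȳᵀ) + ᾱσ_R·N_R(v)·L·‖x̄ − x*‖₂. -/

import Mathlib

open Matrix

/-- For `x ∈ ℝ^{n×p}` with rows `x_i`, `gradF G x ∈ ℝ^{n×p}` is the matrix whose `i`-th row
is the gradient `G i (x i) = ∇f_i(x_i)`. -/
noncomputable def gradF {n p : ℕ} (G : Fin n → EuclideanSpace ℝ (Fin p) → EuclideanSpace ℝ (Fin p))
    (x : Matrix (Fin n) (Fin p) ℝ) : Matrix (Fin n) (Fin p) ℝ :=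
  Matrix.of fun i c => G i (WithLp.toLp 2 (x i)) c

/-- `N` is a norm on `ℝⁿ`. -/
def IsNormOn {n : ℕ} (N : (Fin n → ℝ) → ℝ) : Prop :=
  (∀ z, 0 ≤ N z) ∧ (∀ z, N z = 0 ↔ z = 0) ∧
  (∀ (c : ℝ) (z : Fin n → ℝ), N (c • z) = |c| * N z) ∧
  (∀ z w : Fin n → ℝ, N (z + w) ≤ N z + N w)

/-- Columnwise extension of a norm `N` on `ℝⁿ` to `n×p` matrices. -/
noncomputable def colNorm {n p : ℕ} (N : (Fin n → ℝ) → ℝ) (X : Matrix (Fin n) (Fin p) ℝ) : ℝ :=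
  Real.sqrt (∑ c, N (fun i => X i c) ^ 2)

/-- Euclidean norm. -/
noncomputable def e2 {p : ℕ} (a : Fin p → ℝ) : ℝ :=
  Real.sqrt (∑ c, a c ^ 2)

/-- The matrix norm induced by a norm `N` on `ℝⁿ`: `sup {N(Wz) : N(z) ≤ 1}`. -/
noncomputable def inducedNorm {n : ℕ} (N : (Fin n → ℝ) → ℝ)
    (W : Matrix (Fin n) (Fin n) ℝ) : ℝ :=
  sSup {r : ℝ | ∃ z : Fin n → ℝ, N z ≤ 1 ∧ r = N (W.mulVec z)}

lemma e2_eq_norm {p : ℕ} (a : Fin p → ℝ) :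
    e2 a = ‖(WithLp.equiv 2 (Fin p → ℝ)).symm a‖ := by
  rw [EuclideanSpace.norm_eq]
  simp [e2, Real.norm_eq_abs, sq_abs]

lemma e2_nonneg {p : ℕ} (a : Fin p → ℝ) : 0 ≤ e2 a := Real.sqrt_nonneg _

lemma e2_mono {p : ℕ} {s t : Fin p → ℝ} (h0 : ∀ c, 0 ≤ s c) (h : ∀ c, s c ≤ t c) :
    e2 s ≤ e2 t :=
  Real.sqrt_le_sqrt (Finset.sum_le_sum fun c _ => pow_le_pow_left₀ (h0 c) (h c) 2)

lemma e2_add_le {p : ℕ} (s t : Fin p → ℝ) : e2 (fun c => s c + t c) ≤ e2 s + e2 t := by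
  have h : (WithLp.equiv 2 (Fin p → ℝ)).symm (fun c => s c + t c)
      = (WithLp.equiv 2 (Fin p → ℝ)).symm s + (WithLp.equiv 2 (Fin p → ℝ)).symm t := rfl
  rw [e2_eq_norm, e2_eq_norm, e2_eq_norm, h]
  exact norm_add_le _ _

lemma e2_const_mul {p : ℕ} (k : ℝ) (hk : 0 ≤ k) (t : Fin p → ℝ) :
    e2 (fun c => k * t c) = k * e2 t := by
  have h : (WithLp.equiv 2 (Fin p → ℝ)).symm (fun c => k * t c)
      = k • (WithLp.equiv 2 (Fin p → ℝ)).symm t := rfl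
  rw [e2_eq_norm, e2_eq_norm, h, norm_smul, Real.norm_eq_abs, abs_of_nonneg hk]
section NormLemmas

variable {n : ℕ} {N : (Fin n → ℝ) → ℝ} (hN : IsNormOn N)

include hN

lemma IsNormOn.nonneg (z : Fin n → ℝ) : 0 ≤ N z := hN.1 z

lemma IsNormOn.zero : N 0 = 0 := (hN.2.1 0).mpr rfl

lemma IsNormOn.smul' (c : ℝ) (z : Fin n → ℝ) : N (c • z) = |c| * N z := hN.2.2.1 c z

lemma IsNormOn.add_le (z w : Fin n → ℝ) : N (z + w) ≤ N z + N w := hN.2.2.2 z w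

lemma IsNormOn.neg (z : Fin n → ℝ) : N (-z) = N z := by
  have := hN.2.2.1 (-1) z
  simpa using this

lemma IsNormOn.sum_le {ι : Type*} (s : Finset ι) (w : ι → (Fin n → ℝ)) :
    N (∑ i ∈ s, w i) ≤ ∑ i ∈ s, N (w i) := by
  classical
  induction s using Finset.induction with
  | empty => simp [hN.zero]
  | insert a s h ih =>
    rw [Finset.sum_insert h, Finset.sum_insert h]
    exact le_trans (hN.add_le _ _) (by linarith)

/-- Upper comparison with the sup norm. -/
lemma IsNormOn.le_const_norm : ∃ C : ℝ, 0 ≤ C ∧ ∀ z : Fin n → ℝ, N z ≤ C * ‖z‖ := by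
  classical
  set e : Fin n → (Fin n → ℝ) := fun i => Pi.single i 1 with he
  refine ⟨∑ i, N (e i), Finset.sum_nonneg fun i _ => hN.1 _, fun z => ?_⟩
  have hz : z = ∑ i, z i • e i := by
    ext j; simp [he, Pi.single_apply]
  calc N z = N (∑ i, z i • e i) := by rw [← hz]
    _ ≤ ∑ i, N (z i • e i) := hN.sum_le _ _
    _ = ∑ i, |z i| * N (e i) := by simp [hN.2.2.1]
    _ ≤ ∑ i, ‖z‖ * N (e i) := by
        refine Finset.sum_le_sum fun i _ => ?_
        exact mul_le_mul_of_nonneg_right (by simpa using norm_le_pi_norm z i) (hN.1 _)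
    _ = (∑ i, N (e i)) * ‖z‖ := by rw [Finset.sum_mul]; simp [mul_comm]

lemma IsNormOn.continuous : Continuous N := by
  obtain ⟨C, hC0, hC⟩ := hN.le_const_norm
  rw [Metric.continuous_iff]
  intro z ε hε
  rcases eq_or_lt_of_le hC0 with h0 | hCpos
  · exact ⟨1, one_pos, fun w _ => by
      have h1 : N w ≤ 0 := by have := hC w; rw [← h0] at this; simpa using this
      have h2 : N z ≤ 0 := by have := hC z; rw [← h0] at this; simpa using this
      have e1 : N w = 0 := le_antisymm h1 (hN.1 w)
      have e2' : N z = 0 := le_antisymm h2 (hN.1 z)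
      simpa [Real.dist_eq, e1, e2'] using hε⟩
  · refine ⟨ε / C, by positivity, fun w hw => ?_⟩
    have key : ∀ a b : Fin n → ℝ, N a - N b ≤ C * ‖a - b‖ := by
      intro a b
      have h1 : N a ≤ N b + N (a - b) := by
        have := hN.add_le b (a - b); simpa using this
      have := hC (a - b)
      linarith
    have h1 := key w z
    have h2 := key z w
    have hd : ‖w - z‖ = dist w z := (dist_eq_norm w z).symm
    have hd2 : ‖z - w‖ = dist w z := by rw [dist_comm] at hd ⊢; exact (dist_eq_norm z w).symm
    rw [Real.dist_eq, abs_sub_lt_iff]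
    constructor
    · have : C * ‖w - z‖ < C * (ε / C) := by
        apply mul_lt_mul_of_pos_left _ hCpos; rw [hd]; exact hw
      rw [mul_div_cancel₀ _ (ne_of_gt hCpos)] at this
      linarith
    · have : C * ‖z - w‖ < C * (ε / C) := by
        apply mul_lt_mul_of_pos_left _ hCpos; rw [hd2]; exact hw
      rw [mul_div_cancel₀ _ (ne_of_gt hCpos)] at this
      linarith

/-- Lower comparison with the sup norm (needs `0 < n`). -/
lemma IsNormOn.const_norm_le (hn : 0 < n) :
    ∃ c : ℝ, 0 < c ∧ ∀ z : Fin n → ℝ, c * ‖z‖ ≤ N z := by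
  classical
  set S := Metric.sphere (0 : Fin n → ℝ) 1 with hS
  have hco : IsCompact S := isCompact_sphere 0 1
  have hne : S.Nonempty := by
    refine ⟨Pi.single ⟨0, hn⟩ (1:ℝ), ?_⟩
    simp [hS, Pi.norm_single]
  obtain ⟨z0, hz0S, hz0min⟩ := hco.exists_isMinOn hne hN.continuous.continuousOn
  have hz0 : z0 ≠ 0 := by
    intro h
    have : ‖z0‖ = 1 := by simpa [hS] using hz0S
    rw [h] at this; simp at this
  have hc : 0 < N z0 := lt_of_le_of_ne (hN.1 z0) (fun h => hz0 ((hN.2.1 z0).mp h.symm))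
  refine ⟨N z0, hc, fun z => ?_⟩
  rcases eq_or_ne z 0 with rfl | hz
  · simp [hN.zero]
  · have hnz : (0:ℝ) < ‖z‖ := norm_pos_iff.mpr hz
    have hw : (‖z‖⁻¹ • z) ∈ S := by
      simp [hS, norm_smul, abs_of_pos (inv_pos.mpr hnz), inv_mul_cancel₀ (ne_of_gt hnz)]
    have h1 : N z0 ≤ N (‖z‖⁻¹ • z) := hz0min hw
    have h2 : N (‖z‖⁻¹ • z) = ‖z‖⁻¹ * N z := by
      rw [hN.2.2.1]; rw [abs_of_pos (inv_pos.mpr hnz)]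
    rw [h2] at h1
    calc N z0 * ‖z‖ ≤ (‖z‖⁻¹ * N z) * ‖z‖ := by
          exact mul_le_mul_of_nonneg_right h1 (le_of_lt hnz)
      _ = N z := by field_simp

end NormLemmas
section Induced

variable {n : ℕ} {N : (Fin n → ℝ) → ℝ} (hN : IsNormOn N) (W : Matrix (Fin n) (Fin n) ℝ)

include hN

lemma IsNormOn.exists_mulVec_bound (hn : 0 < n) :
    ∃ C : ℝ, 0 ≤ C ∧ ∀ z, N (W.mulVec z) ≤ C * N z := by
  obtain ⟨C, hC0, hC⟩ := hN.le_const_norm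
  obtain ⟨c, hc0, hc⟩ := hN.const_norm_le hn
  set T : (Fin n → ℝ) →L[ℝ] (Fin n → ℝ) := LinearMap.toContinuousLinearMap W.mulVecLin
  refine ⟨C * ‖T‖ * c⁻¹, by positivity, fun z => ?_⟩
  have h1 : N (W.mulVec z) ≤ C * ‖W.mulVec z‖ := hC _
  have h2 : ‖W.mulVec z‖ ≤ ‖T‖ * ‖z‖ := T.le_opNorm z
  have h3 : ‖z‖ ≤ c⁻¹ * N z := by
    have h := hc z
    rw [← le_div_iff₀' hc0] at h
    simpa [div_eq_inv_mul] using h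
  calc N (W.mulVec z) ≤ C * ‖W.mulVec z‖ := h1
    _ ≤ C * (‖T‖ * ‖z‖) := by
        exact mul_le_mul_of_nonneg_left h2 hC0
    _ ≤ C * (‖T‖ * (c⁻¹ * N z)) := by
        refine mul_le_mul_of_nonneg_left (mul_le_mul_of_nonneg_left h3 (norm_nonneg _)) hC0
    _ = C * ‖T‖ * c⁻¹ * N z := by ring

lemma IsNormOn.inducedNorm_nonneg (hn : 0 < n) : 0 ≤ inducedNorm N W := by
  obtain ⟨C, hC0, hC⟩ := hN.exists_mulVec_bound W hn
  have hbdd : BddAbove {r : ℝ | ∃ z : Fin n → ℝ, N z ≤ 1 ∧ r = N (W.mulVec z)} := by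
    refine ⟨C, fun r hr => ?_⟩
    obtain ⟨z, hz, rfl⟩ := hr
    calc N (W.mulVec z) ≤ C * N z := hC z
      _ ≤ C * 1 := mul_le_mul_of_nonneg_left hz hC0
      _ = C := mul_one C
  have hmem : (0:ℝ) ∈ {r : ℝ | ∃ z : Fin n → ℝ, N z ≤ 1 ∧ r = N (W.mulVec z)} := by
    exact ⟨0, by simp [hN.zero], by simp [Matrix.mulVec_zero, hN.zero]⟩
  exact le_csSup hbdd hmem

lemma IsNormOn.mulVec_le_inducedNorm (hn : 0 < n) (z : Fin n → ℝ) :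
    N (W.mulVec z) ≤ inducedNorm N W * N z := by
  obtain ⟨C, hC0, hC⟩ := hN.exists_mulVec_bound W hn
  have hbdd : BddAbove {r : ℝ | ∃ z : Fin n → ℝ, N z ≤ 1 ∧ r = N (W.mulVec z)} := by
    refine ⟨C, fun r hr => ?_⟩
    obtain ⟨w, hw, rfl⟩ := hr
    calc N (W.mulVec w) ≤ C * N w := hC w
      _ ≤ C * 1 := mul_le_mul_of_nonneg_left hw hC0
      _ = C := mul_one C
  rcases eq_or_ne z 0 with rfl | hz
  · simp [Matrix.mulVec_zero, hN.zero]
  · have hNz : 0 < N z := lt_of_le_of_ne (hN.1 z) fun h => hz ((hN.2.1 z).mp h.symm)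
    set w := (N z)⁻¹ • z with hw
    have hNw : N w = 1 := by
      rw [hw, hN.2.2.1, abs_of_pos (inv_pos.mpr hNz), inv_mul_cancel₀ (ne_of_gt hNz)]
    have hmem : N (W.mulVec w) ∈ {r : ℝ | ∃ z : Fin n → ℝ, N z ≤ 1 ∧ r = N (W.mulVec z)} :=
      ⟨w, le_of_eq hNw, rfl⟩
    have h1 : N (W.mulVec w) ≤ inducedNorm N W := le_csSup hbdd hmem
    have h2 : N (W.mulVec w) = (N z)⁻¹ * N (W.mulVec z) := by
      rw [hw, Matrix.mulVec_smul, hN.2.2.1, abs_of_pos (inv_pos.mpr hNz)]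
    rw [h2] at h1
    calc N (W.mulVec z) = N z * ((N z)⁻¹ * N (W.mulVec z)) := by field_simp
      _ ≤ N z * inducedNorm N W := mul_le_mul_of_nonneg_left h1 (le_of_lt hNz)
      _ = inducedNorm N W * N z := mul_comm _ _

end Induced
section ColNorm

variable {n p : ℕ}

lemma colNorm_eq (N : (Fin n → ℝ) → ℝ) (X : Matrix (Fin n) (Fin p) ℝ) :
    colNorm N X = e2 (fun c => N (fun i => X i c)) := rfl

lemma colNorm_nonneg (N : (Fin n → ℝ) → ℝ) (X : Matrix (Fin n) (Fin p) ℝ) :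
    0 ≤ colNorm N X := Real.sqrt_nonneg _

lemma colNorm_sub_sub_le {N : (Fin n → ℝ) → ℝ} (hN : IsNormOn N)
    (A B C : Matrix (Fin n) (Fin p) ℝ) :
    colNorm N (A - B - C) ≤ colNorm N A + colNorm N B + colNorm N C := by
  have hcol : ∀ c, N (fun i => (A - B - C) i c)
      ≤ N (fun i => A i c) + (N (fun i => B i c) + N (fun i => C i c)) := by
    intro c
    have h1 : (fun i => (A - B - C) i c)
        = (fun i => A i c) + (-(fun i => B i c) + -(fun i => C i c)) := by
      ext i; simp [Matrix.sub_apply]; ring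
    rw [h1]
    refine le_trans (hN.add_le _ _) ?_
    have h2 := hN.add_le (-(fun i => B i c)) (-(fun i => C i c))
    rw [hN.neg, hN.neg] at h2
    linarith
  calc colNorm N (A - B - C) = e2 (fun c => N (fun i => (A - B - C) i c)) := rfl
    _ ≤ e2 (fun c => N (fun i => A i c) + (N (fun i => B i c) + N (fun i => C i c))) :=
        e2_mono (fun c => hN.1 _) hcol
    _ ≤ e2 (fun c => N (fun i => A i c))
        + e2 (fun c => N (fun i => B i c) + N (fun i => C i c)) := e2_add_le _ _
    _ ≤ e2 (fun c => N (fun i => A i c)) + (e2 (fun c => N (fun i => B i c))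
        + e2 (fun c => N (fun i => C i c))) := by linarith [e2_add_le (fun c => N (fun i => B i c)) (fun c => N (fun i => C i c))]
    _ = colNorm N A + colNorm N B + colNorm N C := by rw [colNorm_eq, colNorm_eq, colNorm_eq]; ring

lemma col_matmul (P : Matrix (Fin n) (Fin n) ℝ) (M : Matrix (Fin n) (Fin p) ℝ) (c : Fin p) :
    (fun i => (P * M) i c) = P.mulVec (fun i => M i c) := by
  ext i; simp [Matrix.mul_apply, Matrix.mulVec, dotProduct]

lemma colNorm_matmul_le {N1 N2 : (Fin n → ℝ) → ℝ} (h1 : ∀ z, 0 ≤ N1 z) (h2 : ∀ z, 0 ≤ N2 z)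
    {k : ℝ} (hk : 0 ≤ k) {P : Matrix (Fin n) (Fin n) ℝ}
    (h : ∀ z, N1 (P.mulVec z) ≤ k * N2 z) (M : Matrix (Fin n) (Fin p) ℝ) :
    colNorm N1 (P * M) ≤ k * colNorm N2 M := by
  calc colNorm N1 (P * M) = e2 (fun c => N1 (fun i => (P * M) i c)) := rfl
    _ ≤ e2 (fun c => k * N2 (fun i => M i c)) := by
        refine e2_mono (fun c => h1 _) fun c => ?_
        rw [col_matmul]; exact h _
    _ = k * e2 (fun c => N2 (fun i => M i c)) := e2_const_mul k hk _
    _ = k * colNorm N2 M := rfl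

lemma colNorm_le_mul {N1 N2 : (Fin n → ℝ) → ℝ} (h1 : ∀ z, 0 ≤ N1 z)
    {k : ℝ} (hk : 0 ≤ k) (h : ∀ z, N1 z ≤ k * N2 z) (M : Matrix (Fin n) (Fin p) ℝ) :
    colNorm N1 M ≤ k * colNorm N2 M := by
  calc colNorm N1 M = e2 (fun c => N1 (fun i => M i c)) := rfl
    _ ≤ e2 (fun c => k * N2 (fun i => M i c)) := e2_mono (fun c => h1 _) fun c => h _
    _ = k * colNorm N2 M := e2_const_mul k hk _

lemma colNorm_rank_one {N : (Fin n → ℝ) → ℝ} (hN : IsNormOn N) (v : Fin n → ℝ) (t : Fin p → ℝ) :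
    colNorm N (Matrix.of fun i c => v i * t c) = N v * e2 t := by
  have hcol : ∀ c, N (fun i => (Matrix.of fun i c => v i * t c) i c) = |t c| * N v := by
    intro c
    have : (fun i => (Matrix.of fun i c => v i * t c) i c) = t c • v := by
      ext i; simp [Matrix.of_apply, mul_comm]
    rw [this, hN.2.2.1]
  unfold colNorm
  rw [show (∑ c, N (fun i => (Matrix.of fun i c => v i * t c) i c) ^ 2)
      = ∑ c, (t c ^ 2) * (N v ^ 2) by
    refine Finset.sum_congr rfl fun c _ => ?_
    rw [hcol c, mul_pow, sq_abs]]
  rw [← Finset.sum_mul, Real.sqrt_mul (Finset.sum_nonneg fun c _ => sq_nonneg _),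
    Real.sqrt_sq (hN.1 v)]
  rw [mul_comm]; rfl

end ColNorm
section Grad

lemma sum_grad_eq_zero {m p : ℕ} (f : Fin m → EuclideanSpace ℝ (Fin p) → ℝ)
    (G : Fin m → EuclideanSpace ℝ (Fin p) → EuclideanSpace ℝ (Fin p))
    (hgrad : ∀ i z, HasGradientAt (f i) (G i z) z)
    (xstar : EuclideanSpace ℝ (Fin p))
    (hmin : ∀ z, ∑ i, f i xstar ≤ ∑ i, f i z) :
    ∑ i, G i xstar = 0 := by
  have h1 : HasFDerivAt (fun z => ∑ i, f i z)
      (∑ i, (InnerProductSpace.toDual ℝ (EuclideanSpace ℝ (Fin p))) (G i xstar)) xstar :=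
    HasFDerivAt.fun_sum (fun i _ => (hgrad i xstar).hasFDerivAt)
  have h2 : IsLocalMin (fun z => ∑ i, f i z) xstar := Filter.Eventually.of_forall hmin
  have h3 := h2.hasFDerivAt_eq_zero h1
  have h4 : (InnerProductSpace.toDual ℝ (EuclideanSpace ℝ (Fin p))) (∑ i, G i xstar) = 0 := by
    rw [map_sum]; exact h3
  have := (InnerProductSpace.toDual ℝ (EuclideanSpace ℝ (Fin p))).injective
    (h4.trans (map_zero _).symm)
  simpa using this

end Grad

/-- One-step bound on the consensus error of the `x`-iterates. -/
theorem push_pull_consensus_error_bound {n p : ℕ} (hn : 0 < n)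
    (f : Fin n → EuclideanSpace ℝ (Fin p) → ℝ)
    (G : Fin n → EuclideanSpace ℝ (Fin p) → EuclideanSpace ℝ (Fin p))
    (hgrad : ∀ i z, HasGradientAt (f i) (G i z) z)
    (μ L : ℝ) (hμ : 0 < μ) (hμL : μ ≤ L)
    (hsc : ∀ i (a b : EuclideanSpace ℝ (Fin p)),
      μ * ‖a - b‖ ^ 2 ≤ (inner ℝ (G i a - G i b) (a - b) : ℝ))
    (hlip : ∀ i (a b : EuclideanSpace ℝ (Fin p)), ‖G i a - G i b‖ ≤ L * ‖a - b‖)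
    (xstar : EuclideanSpace ℝ (Fin p))
    (hmin : ∀ z, ∑ i, f i xstar ≤ ∑ i, f i z)
    (R : Matrix (Fin n) (Fin n) ℝ)
    (hRnonneg : ∀ i j, 0 ≤ R i j) (hRrow : ∀ i, ∑ j, R i j = 1)
    (u : Fin n → ℝ) (hu : ∀ i, 0 ≤ u i) (huR : Matrix.vecMul u R = u) (husum : ∑ i, u i = n)
    (v : Fin n → ℝ) (hv : ∀ i, 0 ≤ v i) (hvsum : ∑ i, v i = n)
    (α : Fin n → ℝ) (hα : ∀ i, 0 ≤ α i)
    (abar : ℝ) (habar₁ : ∀ i, α i ≤ abar) (habar₂ : ∃ i, α i = abar)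
    (NR NC : (Fin n → ℝ) → ℝ) (hNR : IsNormOn NR) (hNC : IsNormOn NC)
    (hNR2 : ∀ z, e2 z ≤ NR z)
    (hNRα : ∀ z, NR ((Matrix.diagonal α).mulVec z) ≤ abar * NR z)
    (δRC : ℝ) (hδRC : 0 ≤ δRC) (hNRC : ∀ z, NR z ≤ δRC * NC z)
    (σR : ℝ) (hσR : σR = inducedNorm NR (R - Matrix.of fun _ j => u j / n))
    (x y : Matrix (Fin n) (Fin p) ℝ)
    (htrack : ∀ c, ∑ i, y i c = ∑ i, gradF G x i c)
    (xbar : Fin p → ℝ) (hxbar : xbar = (n : ℝ)⁻¹ • Matrix.vecMul u x)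
    (ybar : Fin p → ℝ) (hybar : ybar = (n : ℝ)⁻¹ • Matrix.vecMul (fun _ => (1 : ℝ)) y)
    (xplus : Matrix (Fin n) (Fin p) ℝ) (hxplus : xplus = R * (x - Matrix.diagonal α * y))
    (xbarplus : Fin p → ℝ) (hxbarplus : xbarplus = (n : ℝ)⁻¹ • Matrix.vecMul u xplus) :
    colNorm NR (xplus - Matrix.of fun _ c => xbarplus c) ≤
      σR * (1 + abar * NR v * L / Real.sqrt n) *
        colNorm NR (x - Matrix.of fun _ c => xbar c) +
      abar * σR * δRC * colNorm NC (y - Matrix.of fun i c => v i * ybar c) +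
      abar * σR * NR v * L * e2 (xbar - (fun c => xstar c)) := by
  classical
  have hnR : (0:ℝ) < n := by exact_mod_cast hn
  have hL : 0 < L := lt_of_lt_of_le hμ hμL
  have habar0 : 0 ≤ abar := by
    obtain ⟨i, hi⟩ := habar₂; rw [← hi]; exact hα i
  have hNRv0 : 0 ≤ NR v := hNR.1 v
  set W : Matrix (Fin n) (Fin n) ℝ := R - Matrix.of (fun _ j => u j / n) with hWdef
  set U : Matrix (Fin n) (Fin n) ℝ := Matrix.of (fun _ j => u j / (n:ℝ)) with hUdef
  set D : Matrix (Fin n) (Fin n) ℝ := Matrix.diagonal α with hDdef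
  set Vy : Matrix (Fin n) (Fin p) ℝ := Matrix.of (fun i c => v i * ybar c) with hVydef
  set Mx : Matrix (Fin n) (Fin p) ℝ := x - Matrix.of (fun _ c => xbar c) with hMxdef
  set My : Matrix (Fin n) (Fin p) ℝ := y - Vy with hMydef
  have hσ0 : 0 ≤ σR := by rw [hσR]; exact hNR.inducedNorm_nonneg _ hn
  have hσmul : ∀ z, NR (W.mulVec z) ≤ σR * NR z := by
    intro z; rw [hσR]; exact hNR.mulVec_le_inducedNorm _ hn z
  -- Matrix identity
  have hId : xplus - (Matrix.of fun _ c => xbarplus c) = W * Mx - W * (D * My) - W * (D * Vy) := by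
    have step1 : (Matrix.of fun _ c => xbarplus c : Matrix (Fin n) (Fin p) ℝ) = U * xplus := by
      ext i c
      simp only [Matrix.of_apply, Matrix.mul_apply, hUdef, hxbarplus, Pi.smul_apply, smul_eq_mul,
        Matrix.vecMul, dotProduct]
      rw [Finset.mul_sum]
      exact Finset.sum_congr rfl fun j _ => by ring
    have step2 : U * R = U := by
      ext i j
      have h := congrFun huR j
      simp only [Matrix.vecMul, dotProduct] at h
      simp only [Matrix.mul_apply, hUdef, Matrix.of_apply]
      rw [show ∑ k, u k / (n:ℝ) * R k j = (∑ k, u k * R k j) / n by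
        rw [Finset.sum_div]; exact Finset.sum_congr rfl fun k _ => by ring, h]
    have step3 : W * (Matrix.of fun _ c => xbar c : Matrix (Fin n) (Fin p) ℝ) = 0 := by
      ext i c
      simp only [Matrix.mul_apply, hWdef, Matrix.sub_apply, Matrix.of_apply, sub_mul,
        Matrix.zero_apply]
      rw [Finset.sum_sub_distrib, ← Finset.sum_mul, hRrow i, ← Finset.sum_mul]
      have hus : ∑ j, U i j = 1 := by
        simp only [hUdef, Matrix.of_apply]
        rw [← Finset.sum_div, husum]; field_simp
      rw [hus]; ring
    have step4 : xplus - (Matrix.of fun _ c => xbarplus c) = W * (x - D * y) := by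
      rw [step1, hxplus, ← Matrix.mul_assoc, step2, hWdef, Matrix.sub_mul]
    have step5 : x - D * y = Mx + (Matrix.of fun _ c => xbar c : Matrix (Fin n) (Fin p) ℝ) - D * My - D * Vy := by
      rw [hMxdef, hMydef, Matrix.mul_sub D y Vy]; abel
    rw [step4, step5, Matrix.mul_sub, Matrix.mul_sub, Matrix.mul_add, step3]; abel
  -- bounds on the three pieces
  have hbound1 : colNorm NR (W * Mx) ≤ σR * colNorm NR Mx :=
    colNorm_matmul_le hNR.1 hNR.1 hσ0 hσmul Mx
  have hDM : ∀ M : Matrix (Fin n) (Fin p) ℝ, colNorm NR (D * M) ≤ abar * colNorm NR M :=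
    fun M => colNorm_matmul_le hNR.1 hNR.1 habar0 hNRα M
  have hbound2 : colNorm NR (W * (D * My)) ≤ σR * (abar * (δRC * colNorm NC My)) := by
    calc colNorm NR (W * (D * My)) ≤ σR * colNorm NR (D * My) :=
          colNorm_matmul_le hNR.1 hNR.1 hσ0 hσmul _
      _ ≤ σR * (abar * colNorm NR My) := mul_le_mul_of_nonneg_left (hDM My) hσ0
      _ ≤ σR * (abar * (δRC * colNorm NC My)) :=
          mul_le_mul_of_nonneg_left (mul_le_mul_of_nonneg_left
            (colNorm_le_mul hNR.1 hδRC hNRC My) habar0) hσ0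
  have hVyeq : colNorm NR Vy = NR v * e2 ybar := colNorm_rank_one hNR v ybar
  have hbound3 : colNorm NR (W * (D * Vy)) ≤ σR * (abar * (NR v * e2 ybar)) := by
    calc colNorm NR (W * (D * Vy)) ≤ σR * colNorm NR (D * Vy) :=
          colNorm_matmul_le hNR.1 hNR.1 hσ0 hσmul _
      _ ≤ σR * (abar * colNorm NR Vy) := mul_le_mul_of_nonneg_left (hDM Vy) hσ0
      _ = σR * (abar * (NR v * e2 ybar)) := by rw [hVyeq]
  -- analytic bound on e2 ybar
  have hybound : e2 ybar ≤ L / Real.sqrt n * colNorm NR Mx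
      + L * e2 (xbar - fun c => xstar c) := by
    have hgsum : ∑ i, G i xstar = 0 := sum_grad_eq_zero f G hgrad xstar hmin
    set xr : Fin n → EuclideanSpace ℝ (Fin p) :=
      fun i => (WithLp.equiv 2 (Fin p → ℝ)).symm (x i) with hxr
    set xb : EuclideanSpace ℝ (Fin p) := (WithLp.equiv 2 (Fin p → ℝ)).symm xbar with hxb
    set g : EuclideanSpace ℝ (Fin p) := ∑ i, G i (xr i) with hg
    have hgc : ∀ c, g c = ∑ i, G i (xr i) c := fun c => by rw [hg, WithLp.ofLp_sum, Finset.sum_apply]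
    have hybar' : ∀ c, ybar c = (n:ℝ)⁻¹ * g c := by
      intro c
      rw [hybar]
      simp only [Pi.smul_apply, smul_eq_mul, Matrix.vecMul, dotProduct]
      rw [hgc c]
      congr 1
      calc ∑ i, 1 * y i c = ∑ i, y i c := by simp
        _ = ∑ i, gradF G x i c := htrack c
        _ = ∑ i, G i (xr i) c := rfl
    have hsplit : g = (∑ i, (G i (xr i) - G i xb)) + (∑ i, (G i xb - G i xstar)) := by
      have h : (∑ i, (G i (xr i) - G i xb)) + (∑ i, (G i xb - G i xstar))
          = ∑ i, G i (xr i) - ∑ i, G i xstar := by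
        rw [Finset.sum_sub_distrib, Finset.sum_sub_distrib]; abel
      rw [h, hgsum, sub_zero, hg]
    have hgnorm : ‖g‖ ≤ L * ∑ i, ‖xr i - xb‖ + (n:ℝ) * (L * ‖xb - xstar‖) := by
      rw [hsplit]
      refine le_trans (norm_add_le _ _) ?_
      have h1 : ‖∑ i, (G i (xr i) - G i xb)‖ ≤ ∑ i, ‖G i (xr i) - G i xb‖ := norm_sum_le _ _
      have h2 : ‖∑ i, (G i xb - G i xstar)‖ ≤ ∑ i, ‖G i xb - G i xstar‖ := norm_sum_le _ _
      have h3 : ∑ i, ‖G i (xr i) - G i xb‖ ≤ ∑ i, L * ‖xr i - xb‖ :=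
        Finset.sum_le_sum fun i _ => hlip i _ _
      have h4 : ∑ i, ‖G i xb - G i xstar‖ ≤ ∑ i, L * ‖xb - xstar‖ :=
        Finset.sum_le_sum fun i _ => hlip i _ _
      have h5 : ∑ _i : Fin n, L * ‖xr _i - xb‖ = L * ∑ i, ‖xr i - xb‖ := by
        rw [Finset.mul_sum]
      have h6 : ∑ _i : Fin n, L * ‖xb - xstar‖ = (n:ℝ) * (L * ‖xb - xstar‖) := by
        simp [Finset.sum_const, Finset.card_univ]
      linarith
    have hcs : ∑ i, ‖xr i - xb‖ ≤ Real.sqrt n * Real.sqrt (∑ i, ‖xr i - xb‖ ^ 2) := by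
      have h := Finset.sum_mul_sq_le_sq_mul_sq Finset.univ (fun _ : Fin n => (1:ℝ))
        (fun i => ‖xr i - xb‖)
      simp only [one_pow, one_mul, Finset.sum_const, Finset.card_univ, Fintype.card_fin,
        nsmul_eq_mul, mul_one] at h
      have h0 : 0 ≤ ∑ i, ‖xr i - xb‖ := Finset.sum_nonneg fun i _ => norm_nonneg _
      calc ∑ i, ‖xr i - xb‖ = Real.sqrt ((∑ i, ‖xr i - xb‖)^2) := (Real.sqrt_sq h0).symm
        _ ≤ Real.sqrt ((n:ℝ) * ∑ i, ‖xr i - xb‖^2) := Real.sqrt_le_sqrt h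
        _ = Real.sqrt n * Real.sqrt (∑ i, ‖xr i - xb‖^2) := Real.sqrt_mul (by positivity) _
    have hfro : Real.sqrt (∑ i, ‖xr i - xb‖ ^ 2) ≤ colNorm NR Mx := by
      have hcolsq : ∀ i, ‖xr i - xb‖ ^ 2 = ∑ c, (Mx i c) ^ 2 := by
        intro i
        rw [EuclideanSpace.norm_eq, Real.sq_sqrt (Finset.sum_nonneg fun c _ => sq_nonneg _)]
        refine Finset.sum_congr rfl fun c _ => ?_
        have hent : (xr i - xb) c = Mx i c := by
          simp [hxr, hxb, hMxdef, Matrix.sub_apply, Matrix.of_apply]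
        rw [Real.norm_eq_abs, sq_abs, hent]
      have h1 : (∑ i, ‖xr i - xb‖ ^ 2) = ∑ c, e2 (fun i => Mx i c) ^ 2 := by
        rw [show (∑ i, ‖xr i - xb‖ ^ 2) = ∑ i, ∑ c, (Mx i c)^2 from
          Finset.sum_congr rfl fun i _ => hcolsq i, Finset.sum_comm]
        refine Finset.sum_congr rfl fun c _ => ?_
        rw [e2, Real.sq_sqrt (Finset.sum_nonneg fun i _ => sq_nonneg _)]
      rw [h1]
      unfold colNorm
      exact Real.sqrt_le_sqrt (Finset.sum_le_sum fun c _ =>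
        pow_le_pow_left₀ (e2_nonneg _) (hNR2 _) 2)
    have he2ybar : e2 ybar = (n:ℝ)⁻¹ * ‖g‖ := by
      have h1 : e2 ybar = e2 (fun c => (n:ℝ)⁻¹ * g c) := by
        refine congrArg e2 ?_; funext c; exact hybar' c
      rw [h1, e2_const_mul _ (by positivity)]
      congr 1
      rw [EuclideanSpace.norm_eq]
      unfold e2
      refine congrArg Real.sqrt (Finset.sum_congr rfl fun c _ => ?_)
      rw [Real.norm_eq_abs, sq_abs]
    have hxz : ‖xb - xstar‖ = e2 (xbar - fun c => xstar c) := by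
      rw [EuclideanSpace.norm_eq]
      unfold e2
      refine congrArg Real.sqrt (Finset.sum_congr rfl fun c _ => ?_)
      rw [Real.norm_eq_abs, sq_abs]
      rfl
    have hss : Real.sqrt n * Real.sqrt n = (n:ℝ) := Real.mul_self_sqrt (le_of_lt (by exact_mod_cast hnR))
    have hsp : 0 < Real.sqrt n := Real.sqrt_pos.mpr hnR
    have chain : ‖g‖ ≤ L * (Real.sqrt n * colNorm NR Mx) + (n:ℝ) * (L * ‖xb - xstar‖) := by
      have h := mul_le_mul_of_nonneg_left
        (le_trans hcs (mul_le_mul_of_nonneg_left hfro (Real.sqrt_nonneg _))) (le_of_lt hL)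
      calc ‖g‖ ≤ L * ∑ i, ‖xr i - xb‖ + (n:ℝ) * (L * ‖xb - xstar‖) := hgnorm
        _ ≤ L * (Real.sqrt n * colNorm NR Mx) + (n:ℝ) * (L * ‖xb - xstar‖) := by linarith
    rw [← hxz, he2ybar]
    have hfin : (n:ℝ)⁻¹ * (L * (Real.sqrt n * colNorm NR Mx) + (n:ℝ) * (L * ‖xb - xstar‖))
        = L / Real.sqrt n * colNorm NR Mx + L * ‖xb - xstar‖ := by
      field_simp
      linear_combination colNorm NR Mx * hss
    have h2 := mul_le_mul_of_nonneg_left chain (by positivity : (0:ℝ) ≤ ((n:ℝ))⁻¹)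
    linarith
  -- assemble
  have htri : colNorm NR (xplus - (Matrix.of fun _ c => xbarplus c))
      ≤ colNorm NR (W * Mx) + colNorm NR (W * (D * My)) + colNorm NR (W * (D * Vy)) := by
    rw [hId]; exact colNorm_sub_sub_le hNR _ _ _
  have hE : σR * (abar * (NR v * e2 ybar))
      ≤ σR * (abar * (NR v * (L / Real.sqrt n * colNorm NR Mx
        + L * e2 (xbar - fun c => xstar c)))) :=
    mul_le_mul_of_nonneg_left (mul_le_mul_of_nonneg_left
      (mul_le_mul_of_nonneg_left hybound hNRv0) habar0) hσ0
  have hfinal : σR * colNorm NR Mx + σR * (abar * (δRC * colNorm NC My))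
      + σR * (abar * (NR v * (L / Real.sqrt n * colNorm NR Mx
        + L * e2 (xbar - fun c => xstar c))))
      = σR * (1 + abar * NR v * L / Real.sqrt n) * colNorm NR Mx
        + abar * σR * δRC * colNorm NC My
        + abar * σR * NR v * L * e2 (xbar - fun c => xstar c) := by
    ring
  calc colNorm NR (xplus - (Matrix.of fun _ c => xbarplus c))
      ≤ colNorm NR (W * Mx) + colNorm NR (W * (D * My)) + colNorm NR (W * (D * Vy)) := htri
    _ ≤ σR * colNorm NR Mx + σR * (abar * (δRC * colNorm NC My))
        + σR * (abar * (NR v * e2 ybar)) := by linarith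
    _ ≤ σR * colNorm NR Mx + σR * (abar * (δRC * colNorm NC My))
        + σR * (abar * (NR v * (L / Real.sqrt n * colNorm NR Mx
          + L * e2 (xbar - fun c => xstar c)))) := by linarith
    _ = _ := by rw [hfinal]
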